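/- A permutation σ ∈ Perm(α) belongs to the normalizer of the Young-type subgroup P in Perm(α) if and only if σ preserves the fibre partition of f, i.e., for all a, b ∈ α one has f(a) = f(b) if and only if f(σ(a)) = f(σ(b)). -/

import Mathlib

/-- The Young-type subgroup of `Equiv.Perm α` associated to `f : α → ι`: the permutations
preserving every fibre of `f` (the pointwise stabilizer of the fibre partition of `f`). -/
def youngSubgroup {α ι : Type*} (f : α → ι) : Subgroup (Equiv.Perm α) where
  carrier := {σ | ∀ a : α, f (σ a) = f a}
  one_mem' := fun _ => rfl
  mul_mem' := fun {σ τ} hσ hτ a => (hσ (τ a)).trans (hτ a)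
  inv_mem' := fun {σ} hσ a => by
    have h := hσ (σ⁻¹ a)
    rw [← Equiv.Perm.mul_apply, mul_inv_cancel, Equiv.Perm.one_apply] at h
    exact h.symm

lemma swap_mem_youngSubgroup {α ι : Type*} [DecidableEq α] {f : α → ι} {a b : α}
    (h : f a = f b) : Equiv.swap a b ∈ youngSubgroup f := by
  intro x
  rcases eq_or_ne x a with rfl | hxa
  · rw [Equiv.swap_apply_left]; exact h.symm
  rcases eq_or_ne x b with rfl | hxb
  · rw [Equiv.swap_apply_right]; exact h
  · rw [Equiv.swap_apply_of_ne_of_ne hxa hxb]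

/-- A permutation normalizes the Young subgroup of `f` iff it preserves the fibre
partition of `f`. -/
theorem mem_normalizer_young_iff {α ι : Type*} [DecidableEq α] [DecidableEq ι] [Fintype α]
    (f : α → ι) (σ : Equiv.Perm α) :
    σ ∈ Subgroup.normalizer (youngSubgroup f : Set (Equiv.Perm α)) ↔
      ∀ a b : α, (f a = f b ↔ f (σ a) = f (σ b)) := by
  rw [Subgroup.mem_normalizer_iff]
  constructor
  · intro H a b
    constructor
    · intro hab
      have h1 := (H (Equiv.swap a b)).mp (swap_mem_youngSubgroup hab)
      have := h1 (σ a)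
      rw [← Equiv.swap_apply_apply, Equiv.swap_apply_left] at this
      exact this.symm
    · intro hab
      have h1 : σ * Equiv.swap a b * σ⁻¹ ∈ youngSubgroup f := by
        rw [← Equiv.swap_apply_apply]; exact swap_mem_youngSubgroup hab
      have := (H (Equiv.swap a b)).mpr h1 a
      rw [Equiv.swap_apply_left] at this
      exact this.symm
  · intro H τ
    constructor
    · intro hτ x
      have := (H (τ (σ⁻¹ x)) (σ⁻¹ x)).mp (hτ (σ⁻¹ x))
      simpa using this
    · intro hτ a
      have := hτ (σ a)
      simp only [Equiv.Perm.mul_apply, Equiv.Perm.inv_def, Equiv.symm_apply_apply] at this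
      exact (H (τ a) a).mpr this
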